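/- Let J be an N×N Hermitian positive definite complex matrix with diagonal entries J_{ii} (which are real and positive). Then tr(J⁻¹) ≥ Σ_{i=1}^{N} 1/J_{ii}, and equality holds if and only if J is a diagonal matrix. (Lemma 3 of the paper.) -/

import Mathlib

open Matrix
open scoped ComplexOrder

theorem diag_inv_key {N : ℕ} (J : Matrix (Fin N) (Fin N) ℂ) (hJ : J.PosDef) (i : Fin N) :
    1 / (J i i).re ≤ (J⁻¹ i i).re ∧
      ((J⁻¹ i i).re = 1 / (J i i).re ↔ ∀ j, j ≠ i → J j i = 0) := by
  have hdet := (Matrix.isUnit_iff_isUnit_det J).mp hJ.isUnit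
  set x : Fin N → ℂ := Pi.single i 1 with hxdef
  set y : Fin N → ℂ := J⁻¹ *ᵥ x with hydef
  have hJy : J *ᵥ y = x := by
    rw [hydef, Matrix.mulVec_mulVec, Matrix.mul_nonsing_inv J hdet, Matrix.one_mulVec]
  have hstarx : star x = x := by ext j; by_cases h : j = i <;> simp [hxdef, Pi.single_apply, h]
  -- diagonal entry is real
  have hdiag : J i i = ((J i i).re : ℂ) := by
    have := congrFun (congrFun hJ.isHermitian.eq i) i
    simp [Matrix.conjTranspose_apply] at this
    exact ((Complex.conj_eq_iff_re.mp this)).symm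
  set a : ℝ := (J i i).re with hadef
  have ha : 0 < a := by
    have := hJ.re_dotProduct_pos (x := x) (by
      intro h; have := congrFun h i; simp [hxdef] at this)
    have h2 : star x ⬝ᵥ J *ᵥ x = J i i := by
      rw [hstarx, hxdef, single_dotProduct]; simp
    rw [h2] at this
    exact this
  set t : ℂ := (a : ℂ)⁻¹ with htdef
  have ht0 : t ≠ 0 := by simp [htdef]; exact_mod_cast ha.ne'
  have htconj : (starRingEnd ℂ) t = t := by simp [htdef]
  set z : Fin N → ℂ := y - t • x with hzdef
  -- hermitian symmetry of the form
  have hsym : ∀ u v : Fin N → ℂ, star (star u ⬝ᵥ J *ᵥ v) = star v ⬝ᵥ J *ᵥ u := by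
    intro u v
    rw [star_dotProduct, star_star, star_mulVec, dotProduct_mulVec, hJ.isHermitian.eq]
  have hJz : J *ᵥ z = x - t • (J *ᵥ x) := by
    rw [hzdef, Matrix.mulVec_sub, Matrix.mulVec_smul, hJy]
  have hBxz : star x ⬝ᵥ J *ᵥ z = 1 - t * J i i := by
    rw [hJz, dotProduct_sub, dotProduct_smul, hstarx]
    have h1 : x ⬝ᵥ x = 1 := by rw [hxdef, single_dotProduct]; simp
    have h2 : x ⬝ᵥ J *ᵥ x = J i i := by rw [hxdef, single_dotProduct]; simp
    rw [h1, h2, smul_eq_mul]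
  have hBzz : (star z ⬝ᵥ J *ᵥ z).re = (J⁻¹ i i).re - 1 / a := by
    have hzx : star z ⬝ᵥ J *ᵥ x = star ((1 : ℂ) - t * J i i) := by
      rw [← hBxz, hsym]
    have expand : star z ⬝ᵥ J *ᵥ z = star z ⬝ᵥ x - t * (star z ⬝ᵥ J *ᵥ x) := by
      rw [hJz, dotProduct_sub, dotProduct_smul, smul_eq_mul]
    have hzx2 : star z ⬝ᵥ x = star (y i) - t := by
      rw [hzdef, star_sub, sub_dotProduct, star_smul, smul_dotProduct]
      have h1 : star y ⬝ᵥ x = star (y i) := by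
        rw [hxdef, dotProduct_single]; simp
      have h2 : star x ⬝ᵥ x = 1 := by rw [hstarx, hxdef, single_dotProduct]; simp
      rw [h1, h2, smul_eq_mul, mul_one]
      simp [htconj]
    rw [expand, hzx, hzx2]
    have hyi : y i = J⁻¹ i i := by rw [hydef, hxdef]; simp [Matrix.mulVec_single]
    rw [hyi, hdiag, htdef]
    have haC : (a : ℂ) ≠ 0 := by exact_mod_cast ha.ne'
    field_simp
    simp only [sub_self, star_zero, sub_zero, Complex.div_ofReal_re]
    rw [div_mul_cancel₀ _ ha.ne']
    simp
  have hnonneg : 0 ≤ (star z ⬝ᵥ J *ᵥ z).re := by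
    by_cases h : z = 0
    · simp [h]
    · exact le_of_lt (hJ.re_dotProduct_pos h)
  have hle : 1 / a ≤ (J⁻¹ i i).re := by linarith [hBzz ▸ hnonneg]
  refine ⟨hle, ?_⟩
  have hziff : z = 0 ↔ ∀ j, j ≠ i → J j i = 0 := by
    constructor
    · intro hz j hj
      have hyx : y = t • x := by rwa [hzdef, sub_eq_zero] at hz
      have h1 : t • (J *ᵥ x) = x := by
        rw [← Matrix.mulVec_smul, ← hyx, hJy]
      have h2 := congrFun h1 j
      simp [hxdef, Pi.single_apply, hj, Matrix.mulVec_single] at h2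
      rcases h2 with h | h
      · exact absurd h ht0
      · exact h
    · intro hd
      have hcol : J *ᵥ x = J i i • x := by
        ext j
        by_cases h : j = i
        · subst h; simp [hxdef, Matrix.mulVec_single, Pi.single_apply]
        · simp [hxdef, Matrix.mulVec_single, Pi.single_apply, h, hd j h]
      have hx' : x = J i i • y := by
        have : J⁻¹ *ᵥ (J *ᵥ x) = x := by
          rw [Matrix.mulVec_mulVec, Matrix.nonsing_inv_mul J hdet, Matrix.one_mulVec]
        rw [← this, hcol, Matrix.mulVec_smul, ← hydef]
      rw [hzdef, sub_eq_zero, hx', htdef, hdiag, smul_smul]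
      rw [inv_mul_cancel₀ (by exact_mod_cast ha.ne' : ((a:ℝ):ℂ) ≠ 0), one_smul]
  rw [← hziff]
  constructor
  · intro h
    by_contra hz
    have h2 : 0 < (star z ⬝ᵥ J *ᵥ z).re := hJ.re_dotProduct_pos hz
    rw [hBzz] at h2
    linarith
  · intro h
    have : (star z ⬝ᵥ J *ᵥ z).re = 0 := by rw [h]; simp
    rw [hBzz] at this
    linarith

/- STATEMENT 8 (Lemma 3): for an N×N Hermitian positive definite complex
matrix J with diagonal entries J_{ii}, one has tr(J⁻¹) ≥ Σᵢ 1/J_{ii}, with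
equality if and only if J is diagonal. -/
theorem trace_inv_ge_sum_inv_diag {N : ℕ}
    (J : Matrix (Fin N) (Fin N) ℂ) (hJ : J.PosDef) :
    (∑ i, 1 / (J i i).re) ≤ (Matrix.trace J⁻¹).re ∧
      ((Matrix.trace J⁻¹).re = ∑ i, 1 / (J i i).re ↔ J.IsDiag) := by
  have htr : (Matrix.trace J⁻¹).re = ∑ i, (J⁻¹ i i).re := by
    rw [Matrix.trace]
    simp [Matrix.diag, Complex.re_sum]
  have hkey := fun i => diag_inv_key J hJ i
  constructor
  · rw [htr]
    exact Finset.sum_le_sum fun i _ => (hkey i).1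
  · rw [htr]
    rw [eq_comm, Finset.sum_eq_sum_iff_of_le fun i _ => (hkey i).1]
    constructor
    · intro h j i hij
      exact (hkey i).2.mp ((h i (Finset.mem_univ i)).symm) j hij
    · intro hd i _
      exact ((hkey i).2.mpr (fun j hj => hd hj)).symm
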